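/- arXiv:1907.04776 — 4 statements merged into one kernel-verified Lean document; each statement's English description precedes it below -/
import Mathlib

section
/- Let ν be a string-monotonic function and let G be a finite prefix-free set of finite binary strings with μ(S_G) > 0, and set i = 1 + ⌈-log₂ μ(S_G)⌉. Then there exists N' ∈ ℕ such that: (1) for all N ≥ N', 2^{-i+2} > |G^N_ν|·2^{-N} > 2^{-i}; and (2) for all N'' < N', |G^{N''}_ν|·2^{-N''} ≤ 2^{-i}. -/
open scoped Classical

/-- The first `n` bits of an infinite binary sequence, as a finite string. -/
def firstN (α : ℕ → Bool) (n : ℕ) : List Bool := List.ofFn fun i : Fin n => α i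

/-- The set of infinite binary sequences extending the finite string `x`. -/
def cylSet (x : List Bool) : Set (ℕ → Bool) := {α | ∀ i : Fin x.length, α i = x.get i}

/-- A set of finite binary strings is prefix-free if no element is a proper prefix
of another element. -/
def PrefixFree (A : Set (List Bool)) : Prop :=
  ∀ x ∈ A, ∀ y ∈ A, x <+: y → x = y

/-- A function on finite binary strings is string-monotonic if it is total computable
and monotone with respect to the prefix relation. -/
def StringMonotonic (ν : List Bool → List Bool) : Prop :=
  Computable ν ∧ ∀ x y : List Bool, ν x <+: ν (x ++ y)

/-- `S_G`: sequences α such that some prefix of α is mapped by ν to a string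
with a prefix in `G`. -/
def SG (ν : List Bool → List Bool) (G : Finset (List Bool)) : Set (ℕ → Bool) :=
  {α | ∃ n : ℕ, ∃ x ∈ G, x <+: ν (firstN α n)}

/-- `G^N_ν`: strings of length `N` whose ν-image has a prefix in `G`. -/
noncomputable def GN (ν : List Bool → List Bool) (G : Finset (List Bool)) (N : ℕ) :
    Finset (List Bool) :=
  ((Finset.univ : Finset (Fin N → Bool)).image fun f => List.ofFn f).filter
    fun y => ∃ x ∈ G, x <+: ν y

lemma firstN_mem_cyl (α : ℕ → Bool) (y : List Bool) (h : α ∈ cylSet y) :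
    firstN α y.length = y := by
  apply List.ext_get (by simp [firstN])
  intro n h1 h2
  have := h ⟨n, h2⟩
  simpa [firstN, List.get_ofFn] using this

lemma mem_cyl_firstN (α : ℕ → Bool) (n : ℕ) : α ∈ cylSet (firstN α n) := by
  intro i
  rw [List.get_eq_getElem]
  simp [firstN, List.get_ofFn]

lemma cyl_measurable (y : List Bool) : MeasurableSet (cylSet y) := by
  have : cylSet y = ⋂ i : Fin y.length, {α : ℕ → Bool | α i = y.get i} := by
    ext α; simp [cylSet]
  rw [this]
  exact MeasurableSet.iInter fun i =>
    measurableSet_eq_fun (measurable_pi_apply (i : ℕ)) measurable_const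

lemma mem_GN {ν : List Bool → List Bool} {G : Finset (List Bool)} {N : ℕ} {y : List Bool} :
    y ∈ GN ν G N ↔ (y.length = N ∧ ∃ x ∈ G, x <+: ν y) := by
  simp only [GN, Finset.mem_filter, Finset.mem_image, Finset.mem_univ, true_and]
  constructor
  · rintro ⟨⟨f, rfl⟩, h⟩; exact ⟨by simp, h⟩
  · rintro ⟨hlen, h⟩
    refine ⟨⟨fun j => y.get (Fin.cast hlen.symm j), ?_⟩, h⟩
    apply List.ext_get (by simp [hlen])
    intro n h1 h2
    simp [List.get_ofFn]

lemma firstN_succ (α : ℕ → Bool) (n : ℕ) :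
    firstN α (n + 1) = firstN α n ++ [α n] := by
  rw [firstN, List.ofFn_succ', List.concat_eq_append]
  rfl

lemma toReal_two_zpow_neg (N : ℕ) :
    ((2:ENNReal) ^ (-(N:ℤ))).toReal = (2:ℝ) ^ (-(N:ℤ)) := by
  rw [ENNReal.zpow_neg, zpow_natCast, ENNReal.toReal_inv,
    ENNReal.toReal_pow, zpow_neg, zpow_natCast]
  norm_num

theorem stmt_0
    (μ : MeasureTheory.Measure (ℕ → Bool)) [MeasureTheory.IsProbabilityMeasure μ]
    (hμ : ∀ x : List Bool, μ (cylSet x) = (2 : ENNReal) ^ (-(x.length : ℤ)))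
    (ν : List Bool → List Bool) (hν : StringMonotonic ν)
    (G : Finset (List Bool)) (hG : PrefixFree (↑G : Set (List Bool)))
    (hpos : 0 < μ (SG ν G))
    (i : ℤ) (hi : i = 1 + ⌈-Real.logb 2 ((μ (SG ν G)).toReal)⌉) :
    ∃ N' : ℕ,
      (∀ N : ℕ, N' ≤ N →
        ((GN ν G N).card : ℝ) * (2 : ℝ) ^ (-(N : ℤ)) < (2 : ℝ) ^ (-i + 2) ∧
        (2 : ℝ) ^ (-i) < ((GN ν G N).card : ℝ) * (2 : ℝ) ^ (-(N : ℤ))) ∧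
      (∀ N'' : ℕ, N'' < N' →
        ((GN ν G N'').card : ℝ) * (2 : ℝ) ^ (-(N'' : ℤ)) ≤ (2 : ℝ) ^ (-i)) := by
  obtain ⟨hνc, hνm⟩ := hν
  set r := (μ (SG ν G)).toReal with hrdef
  have hμtop : μ (SG ν G) ≠ ⊤ := MeasureTheory.measure_ne_top μ _
  have hrpos : 0 < r := ENNReal.toReal_pos (ne_of_gt hpos) hμtop
  set L := Real.logb 2 r with hL
  have h2L : (2 : ℝ) ^ L = r := Real.rpow_logb (by norm_num) (by norm_num) hrpos
  -- the increasing approximation sets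
  set C : ℕ → Set (ℕ → Bool) := fun N => {α | ∃ x ∈ G, x <+: ν (firstN α N)} with hCdef
  have hmono : Monotone C := by
    apply monotone_nat_of_le_succ
    intro N α hα
    obtain ⟨x, hx, hpre⟩ := hα
    exact ⟨x, hx, hpre.trans (by rw [firstN_succ]; exact hνm _ _)⟩
  have hUnion : (⋃ N, C N) = SG ν G := by
    ext α; simp [SG, hCdef]
  -- C N as a finite disjoint union of cylinders
  have hCeq : ∀ N, C N = ⋃ y ∈ GN ν G N, cylSet y := by
    intro N
    ext α
    constructor
    · rintro ⟨x, hx, hpre⟩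
      refine Set.mem_biUnion ?_ (mem_cyl_firstN α N)
      exact mem_GN.2 ⟨by simp [firstN], x, hx, hpre⟩
    · rintro hα
      obtain ⟨y, hy, hαy⟩ := Set.mem_iUnion₂.1 hα
      obtain ⟨hlen, x, hx, hpre⟩ := mem_GN.1 hy
      have : firstN α N = y := by rw [← hlen]; exact firstN_mem_cyl α y hαy
      exact ⟨x, hx, this ▸ hpre⟩
  -- measure of C N
  have hμC : ∀ N, μ (C N) = ((GN ν G N).card : ENNReal) * (2 : ENNReal) ^ (-(N : ℤ)) := by
    intro N
    rw [hCeq N]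
    rw [MeasureTheory.measure_biUnion_finset ?_ (fun y _ => cyl_measurable y)]
    · rw [Finset.sum_congr rfl (fun y hy => ?_), Finset.sum_const, nsmul_eq_mul]
      rw [hμ y, (mem_GN.1 hy).1]
    · intro y hy z hz hne
      simp only [Finset.coe_sort_coe, Function.onFun]
      rw [Set.disjoint_left]
      intro α hαy hαz
      exact hne (((firstN_mem_cyl α y hαy).symm.trans
        (by rw [(mem_GN.1 hy).1, ← (mem_GN.1 hz).1]; exact firstN_mem_cyl α z hαz)))
  have hCtop : ∀ N, μ (C N) ≠ ⊤ := fun N => MeasureTheory.measure_ne_top μ _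
  -- real-valued masses
  set a : ℕ → ℝ := fun N => ((GN ν G N).card : ℝ) * (2 : ℝ) ^ (-(N : ℤ)) with hadef
  have hareal : ∀ N, (μ (C N)).toReal = a N := by
    intro N
    rw [hμC N, ENNReal.toReal_mul, toReal_two_zpow_neg]
    simp [hadef]
  have hamono : Monotone a := by
    intro M N h
    rw [← hareal M, ← hareal N]
    exact ENNReal.toReal_mono (hCtop N) (MeasureTheory.measure_mono (hmono h))
  have haler : ∀ N, a N ≤ r := by
    intro N
    rw [← hareal N]
    exact ENNReal.toReal_mono hμtop (MeasureTheory.measure_mono (by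
      rw [← hUnion]; exact Set.subset_iUnion C N))
  -- key real inequalities
  have hlow : (2 : ℝ) ^ (-i) < r := by
    have h1 : ((-i : ℤ) : ℝ) ≤ L - 1 := by
      have := Int.le_ceil (-L)
      push_cast [hi]
      linarith
    calc (2 : ℝ) ^ (-i) = (2 : ℝ) ^ ((-i : ℤ) : ℝ) := (Real.rpow_intCast 2 (-i)).symm
      _ ≤ (2 : ℝ) ^ (L - 1) := Real.rpow_le_rpow_of_exponent_le one_le_two h1
      _ = (2 : ℝ) ^ L / 2 := by rw [Real.rpow_sub (by norm_num)]; norm_num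
      _ = r / 2 := by rw [h2L]
      _ < r := by linarith
  have hupp : r < (2 : ℝ) ^ (-i + 2) := by
    have h1 : L < ((-i + 2 : ℤ) : ℝ) := by
      have := Int.ceil_lt_add_one (-L)
      push_cast [hi]
      linarith
    calc r = (2 : ℝ) ^ L := h2L.symm
      _ < (2 : ℝ) ^ ((-i + 2 : ℤ) : ℝ) := Real.rpow_lt_rpow_of_exponent_lt one_lt_two h1
      _ = (2 : ℝ) ^ (-i + 2) := Real.rpow_intCast 2 (-i + 2)
  -- existence of some N with a N > 2^(-i)
  have hiSup : μ (SG ν G) = ⨆ N, μ (C N) := by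
    rw [← hUnion]
    exact hmono.directed_le.measure_iUnion
  have hexists : ∃ N, (2 : ℝ) ^ (-i) < a N := by
    have h1 : ENNReal.ofReal ((2 : ℝ) ^ (-i)) < μ (SG ν G) := by
      rw [← ENNReal.ofReal_toReal hμtop]
      exact ENNReal.ofReal_lt_ofReal_iff hrpos |>.2 hlow
    rw [hiSup, lt_iSup_iff] at h1
    obtain ⟨N, hN⟩ := h1
    refine ⟨N, ?_⟩
    rw [← hareal N]
    exact (ENNReal.ofReal_lt_iff_lt_toReal (le_of_lt (by positivity)) (hCtop N)).1 hN
  -- conclude with the least such N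
  refine ⟨Nat.find hexists, fun N hN => ⟨lt_of_le_of_lt (haler N) hupp, ?_⟩,
    fun N'' hN'' => ?_⟩
  · exact lt_of_lt_of_le (Nat.find_spec hexists) (hamono hN)
  · exact le_of_not_gt (Nat.find_min hexists hN'')
end

section
/- Let ν be a string-monotonic function and G a finite prefix-free set of finite binary strings. Then for every N ∈ ℕ, |G^N_ν|·2^{-N} ≤ μ(S_G). -/
open scoped Classical

lemma cylSet_measurable (x : List Bool) : MeasurableSet (cylSet x) := by
  have h : cylSet x = ⋂ i : Fin x.length, (fun α : ℕ → Bool => α i) ⁻¹' {x.get i} := by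
    ext α; simp [cylSet]
  rw [h]
  exact MeasurableSet.iInter fun i =>
    (measurable_pi_apply (i : ℕ)) (measurableSet_singleton _)

lemma firstN_eq_of_mem_cyl {y : List Bool} {N : ℕ} (hlen : y.length = N)
    {α : ℕ → Bool} (hα : α ∈ cylSet y) : firstN α N = y := by
  apply List.ext_get
  · simp [firstN, hlen]
  · intro i h1 h2
    simp only [firstN, List.get_ofFn]
    have := hα ⟨i, h2⟩
    simpa using this

theorem stmt_4
    (μ : MeasureTheory.Measure (ℕ → Bool)) [MeasureTheory.IsProbabilityMeasure μ]
    (hμ : ∀ x : List Bool, μ (cylSet x) = (2 : ENNReal) ^ (-(x.length : ℤ)))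
    (ν : List Bool → List Bool) (hν : StringMonotonic ν)
    (G : Finset (List Bool)) (hG : PrefixFree (↑G : Set (List Bool))) :
    ∀ N : ℕ, ((GN ν G N).card : ENNReal) * (2 : ENNReal) ^ (-(N : ℤ)) ≤ μ (SG ν G) := by
  intro N
  have hlen : ∀ y ∈ GN ν G N, y.length = N := by
    intro y hy
    rw [GN, Finset.mem_filter, Finset.mem_image] at hy
    obtain ⟨⟨f, _, rfl⟩, _⟩ := hy
    simp
  have hex : ∀ y ∈ GN ν G N, ∃ x ∈ G, x <+: ν y := by
    intro y hy
    exact (Finset.mem_filter.mp hy).2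
  have hsub : ∀ y ∈ GN ν G N, cylSet y ⊆ SG ν G := by
    intro y hy α hα
    exact ⟨N, by rw [firstN_eq_of_mem_cyl (hlen y hy) hα]; exact hex y hy⟩
  have hdisj : (↑(GN ν G N) : Set (List Bool)).PairwiseDisjoint (fun y => cylSet y) := by
    intro y hy z hz hne
    rw [Function.onFun, Set.disjoint_left]
    intro α hαy hαz
    exact hne ((firstN_eq_of_mem_cyl (hlen y hy) hαy).symm.trans
      (firstN_eq_of_mem_cyl (hlen z hz) hαz))
  calc ((GN ν G N).card : ENNReal) * (2 : ENNReal) ^ (-(N : ℤ))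
      = ∑ y ∈ GN ν G N, μ (cylSet y) := by
        rw [Finset.sum_congr rfl (fun y hy => by rw [hμ, hlen y hy])]
        simp [Finset.sum_const, nsmul_eq_mul]
    _ = μ (⋃ y ∈ GN ν G N, cylSet y) :=
        (MeasureTheory.measure_biUnion_finset hdisj fun y _ => cylSet_measurable y).symm
    _ ≤ μ (SG ν G) := MeasureTheory.measure_mono (Set.iUnion₂_subset hsub)
end

section
/- Let m : PMF ℕ, let δ be a real number with 0 < δ ≤ 1, and let Q : PMF (Finset ℕ) have finite support and satisfy m(D) ≥ δ for every D in the support of Q. Then for every k ∈ ℕ there exists a tuple z : Fin k → ℕ such that Σ{Q(D) : D in the support of Q with D ∩ range(z) = ∅} ≤ (1 − δ)^k. -/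
open scoped Classical

theorem stmt_6
    (m : PMF ℕ) (δ : ℝ) (hδ0 : 0 < δ) (hδ1 : δ ≤ 1)
    (Q : PMF (Finset ℕ)) (hQfin : Q.support.Finite)
    (hheavy : ∀ D ∈ Q.support, ENNReal.ofReal δ ≤ ∑ x ∈ D, m x) :
    ∀ k : ℕ, ∃ z : Fin k → ℕ,
      (∑' D : Finset ℕ, if (↑D : Set ℕ) ∩ Set.range z = ∅ then Q D else 0) ≤
        ENNReal.ofReal ((1 - δ) ^ k) := by
  have hδ' : (0:ℝ) ≤ 1 - δ := by linarith
  intro k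
  induction k with
  | zero =>
    refine ⟨Fin.elim0, ?_⟩
    calc (∑' D : Finset ℕ, if (↑D : Set ℕ) ∩ Set.range (Fin.elim0 : Fin 0 → ℕ) = ∅ then Q D else 0)
        ≤ ∑' D, Q D := ENNReal.tsum_le_tsum fun D => by split <;> simp
      _ = 1 := Q.tsum_coe
      _ ≤ _ := by simp
  | succ k ih =>
    obtain ⟨z, hz⟩ := ih
    set a : Finset ℕ → ENNReal := fun D => if (↑D : Set ℕ) ∩ Set.range z = ∅ then Q D else 0 with ha
    set g : ℕ → ENNReal := fun x =>
      ∑' D : Finset ℕ, if (↑D : Set ℕ) ∩ Set.range (Fin.cons x z : Fin (k+1) → ℕ) = ∅ then Q D else 0 with hgdef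
    have hcond : ∀ (x : ℕ) (D : Finset ℕ),
        ((↑D : Set ℕ) ∩ Set.range (Fin.cons x z : Fin (k+1) → ℕ) = ∅) ↔
          (x ∉ D ∧ (↑D : Set ℕ) ∩ Set.range z = ∅) := by
      intro x D
      rw [Fin.range_cons]
      simp only [Set.eq_empty_iff_forall_notMem, Set.mem_inter_iff, Set.mem_insert_iff]
      constructor
      · intro h
        refine ⟨fun hx => h x ⟨hx, Or.inl rfl⟩, fun y hy => h y ⟨hy.1, Or.inr hy.2⟩⟩
      · rintro ⟨h1, h2⟩ y ⟨hyD, hy⟩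
        rcases hy with rfl | hy
        · exact h1 hyD
        · exact h2 y ⟨hyD, hy⟩
    have hg : ∀ x, g x = ∑' D : Finset ℕ, (if x ∈ D then 0 else 1) * a D := by
      intro x
      refine tsum_congr fun D => ?_
      rw [if_congr (hcond x D) rfl rfl]
      by_cases h1 : x ∈ D <;> by_cases h2 : (↑D : Set ℕ) ∩ Set.range z = ∅ <;>
        simp [ha, h1, h2]
    set B : Finset ℕ → ENNReal := fun D => ∑' x : ℕ, if x ∈ D then 0 else m x with hB
    have hE : (∑' x, m x * g x) = ∑' D : Finset ℕ, a D * B D := by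
      calc (∑' x, m x * g x)
          = ∑' (x : ℕ) (D : Finset ℕ), a D * (if x ∈ D then 0 else m x) := by
            refine tsum_congr fun x => ?_
            rw [hg x, ← ENNReal.tsum_mul_left]
            refine tsum_congr fun D => ?_
            by_cases h1 : x ∈ D <;> simp [h1, mul_comm]
        _ = ∑' (D : Finset ℕ) (x : ℕ), a D * (if x ∈ D then 0 else m x) := ENNReal.tsum_comm
        _ = ∑' D : Finset ℕ, a D * B D := by
            refine tsum_congr fun D => ?_
            rw [hB, ENNReal.tsum_mul_left]
    have hBle : ∀ D ∈ Q.support, B D ≤ ENNReal.ofReal (1 - δ) := by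
      intro D hD
      have hsplit : (∑ x ∈ D, m x) + B D = 1 := by
        rw [← m.tsum_coe]
        have h1 : (∑ x ∈ D, m x) = ∑' x : ℕ, if x ∈ D then m x else 0 := by
          rw [tsum_eq_sum (s := D) (fun x hx => if_neg hx)]
          exact Finset.sum_congr rfl fun x hx => (if_pos hx).symm
        rw [h1, hB, ← ENNReal.tsum_add]
        refine tsum_congr fun x => ?_
        by_cases h : x ∈ D <;> simp [h]
      have hofsub : ENNReal.ofReal (1 - δ) = 1 - ENNReal.ofReal δ := by
        rw [ENNReal.ofReal_sub _ hδ0.le, ENNReal.ofReal_one]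
      rw [hofsub]
      have : B D + ENNReal.ofReal δ ≤ 1 := by
        calc B D + ENNReal.ofReal δ ≤ B D + ∑ x ∈ D, m x :=
              add_le_add_right (hheavy D hD) _
          _ = 1 := by rw [add_comm]; exact hsplit
      exact ENNReal.le_sub_of_add_le_right ENNReal.ofReal_ne_top this
    have hEle : (∑' x, m x * g x) ≤ ENNReal.ofReal ((1 - δ) ^ (k+1)) := by
      rw [hE]
      calc (∑' D : Finset ℕ, a D * B D)
          ≤ ∑' D : Finset ℕ, a D * ENNReal.ofReal (1 - δ) := by
            refine ENNReal.tsum_le_tsum fun D => ?_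
            by_cases hD : D ∈ Q.support
            · exact mul_le_mul_right (hBle D hD) _
            · have : a D = 0 := by
                have : Q D = 0 := by simpa [PMF.mem_support_iff] using hD
                simp [ha, this]
              simp [this]
        _ = ENNReal.ofReal (1 - δ) * ∑' D, a D := by
            rw [ENNReal.tsum_mul_right, mul_comm]
        _ ≤ ENNReal.ofReal (1 - δ) * ENNReal.ofReal ((1 - δ) ^ k) :=
            mul_le_mul_right hz _
        _ = ENNReal.ofReal ((1 - δ) ^ (k+1)) := by
            rw [← ENNReal.ofReal_mul hδ', pow_succ, mul_comm]
    -- averaging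
    by_contra hcon
    push_neg at hcon
    have hcon' : ∀ x : ℕ, ENNReal.ofReal ((1 - δ) ^ (k+1)) < g x := fun x => hcon (Fin.cons x z)
    obtain ⟨x0, hx0⟩ := m.support_nonempty
    have hx0' : m x0 ≠ 0 := hx0
    set c := ENNReal.ofReal ((1 - δ) ^ (k+1)) with hc
    have hmx0top : m x0 ≠ ⊤ := m.apply_ne_top x0
    have hmc : (∑' x : ℕ, m x * c) = c := by
      rw [ENNReal.tsum_mul_right, m.tsum_coe, one_mul]
    have hlt : c < ∑' x, m x * g x := by
      rw [← hmc]
      refine ENNReal.tsum_lt_tsum (i := x0) (by rw [hmc]; exact ENNReal.ofReal_ne_top)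
        (fun x => mul_le_mul_right (hcon' x).le _) ?_
      exact (ENNReal.mul_lt_mul_iff_right hx0' hmx0top).mpr (hcon' x0)
    exact absurd hEle (not_le.mpr hlt)
end

section
/- Let m : PMF ℕ, let δ be a real number with 0 < δ ≤ 1, and let Q : PMF (Finset ℕ) have finite support and satisfy m(D) ≥ δ for every D in the support of Q. Then for every k ∈ ℕ there exists a tuple z : Fin k → ℕ such that every D in the support of Q with Q(D) > (1 − δ)^k satisfies D ∩ range(z) ≠ ∅. -/
open scoped Classical

theorem stmt_7
    (m : PMF ℕ) (δ : ℝ) (hδ0 : 0 < δ) (hδ1 : δ ≤ 1)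
    (Q : PMF (Finset ℕ)) (hQfin : Q.support.Finite)
    (hheavy : ∀ D ∈ Q.support, ENNReal.ofReal δ ≤ ∑ x ∈ D, m x) :
    ∀ k : ℕ, ∃ z : Fin k → ℕ,
      ∀ D ∈ Q.support, ENNReal.ofReal ((1 - δ) ^ k) < Q D →
        ((↑D : Set ℕ) ∩ Set.range z).Nonempty := by
  intro k
  set s : Finset (Finset ℕ) := hQfin.toFinset with hs
  have hδ1' : (0:ℝ) ≤ 1 - δ := by linarith
  -- heavy in real form
  have hheavyR : ∀ D ∈ s, δ ≤ ∑ x ∈ D, (m x).toReal := by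
    intro D hD
    have hD' : D ∈ Q.support := by simpa [hs] using hD
    have h := hheavy D hD'
    have hfin : (∑ x ∈ D, m x) ≠ ⊤ :=
      ENNReal.sum_ne_top.2 (fun x _ => m.apply_ne_top x)
    rw [ENNReal.ofReal_le_iff_le_toReal hfin] at h
    rwa [ENNReal.toReal_sum (fun x _ => m.apply_ne_top x)] at h
  -- total mass bounds
  have hQsumR : ∀ t : Finset (Finset ℕ), ∑ D ∈ t, (Q D).toReal ≤ 1 := by
    intro t
    have h1 : ∑ D ∈ t, Q D ≤ 1 := by
      calc ∑ D ∈ t, Q D ≤ ∑' D, Q D := ENNReal.sum_le_tsum t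
        _ = 1 := Q.tsum_coe
    have := ENNReal.toReal_mono (by simp) h1
    rwa [ENNReal.toReal_sum (fun D _ => Q.apply_ne_top D), ENNReal.toReal_one] at this
  have hmsumR : ∀ t : Finset ℕ, ∑ x ∈ t, (m x).toReal ≤ 1 := by
    intro t
    have h1 : ∑ x ∈ t, m x ≤ 1 := by
      calc ∑ x ∈ t, m x ≤ ∑' x, m x := ENNReal.sum_le_tsum t
        _ = 1 := m.tsum_coe
    have := ENNReal.toReal_mono (by simp) h1
    rwa [ENNReal.toReal_sum (fun x _ => m.apply_ne_top x), ENNReal.toReal_one] at this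
  have key : ∀ n : ℕ, ∃ z : Fin n → ℕ,
      ∑ D ∈ s.filter (fun D => ∀ i, z i ∉ D), (Q D).toReal ≤ (1 - δ) ^ n := by
    intro n
    induction n with
    | zero =>
      refine ⟨Fin.elim0, ?_⟩
      calc ∑ D ∈ s.filter (fun D => ∀ i : Fin 0, Fin.elim0 i ∉ D), (Q D).toReal
          ≤ ∑ D ∈ s, (Q D).toReal :=
            Finset.sum_le_sum_of_subset_of_nonneg (Finset.filter_subset _ _)
              (fun _ _ _ => ENNReal.toReal_nonneg)
        _ ≤ 1 := hQsumR s
        _ = (1 - δ) ^ 0 := by simp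
    | succ n ih =>
      obtain ⟨z, hz⟩ := ih
      set E : Finset (Finset ℕ) := s.filter (fun D => ∀ i, z i ∉ D) with hE
      set W : ℝ := ∑ D ∈ E, (Q D).toReal with hW
      -- claim: there is x₀ with ∑ over E restricted to D containing x₀ ≥ δ W
      have main : ∃ x₀ : ℕ,
          δ * W ≤ ∑ D ∈ E.filter (fun D => x₀ ∈ D), (Q D).toReal := by
        rcases E.eq_empty_or_nonempty with hEe | hEne
        · exact ⟨0, by simp [hW, hEe]⟩
        · set U : Finset ℕ := E.biUnion id with hU
          have hDU : ∀ D ∈ E, D ⊆ U := by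
            intro D hD x hx
            exact Finset.mem_biUnion.2 ⟨D, hD, hx⟩
          have hUne : U.Nonempty := by
            obtain ⟨D, hD⟩ := hEne
            have hDs : D ∈ s := (Finset.mem_filter.1 hD).1
            have : δ ≤ ∑ x ∈ D, (m x).toReal := hheavyR D hDs
            have hDne : D.Nonempty := by
              by_contra h
              rw [Finset.not_nonempty_iff_eq_empty] at h
              simp [h] at this; linarith
            obtain ⟨x, hx⟩ := hDne
            exact ⟨x, hDU D hD hx⟩
          set f : ℕ → ℝ := fun x => ∑ D ∈ E.filter (fun D => x ∈ D), (Q D).toReal with hf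
          have favg : δ * W ≤ ∑ x ∈ U, (m x).toReal * f x := by
            have swap : ∑ x ∈ U, (m x).toReal * f x
                = ∑ D ∈ E, (Q D).toReal * ∑ x ∈ D, (m x).toReal := by
              simp only [hf, Finset.sum_filter, Finset.mul_sum]
              rw [Finset.sum_comm]
              refine Finset.sum_congr rfl (fun D hD => ?_)
              simp only [mul_ite, mul_zero]
              rw [← Finset.sum_filter]
              have hUD : U.filter (fun x => x ∈ D) = D := by
                ext x
                simp only [Finset.mem_filter]
                exact ⟨fun h => h.2, fun h => ⟨hDU D hD h, h⟩⟩
              rw [hUD]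
              exact Finset.sum_congr rfl (fun x _ => mul_comm _ _)
            rw [swap, hW, Finset.mul_sum]
            refine Finset.sum_le_sum (fun D hD => ?_)
            rw [mul_comm]
            exact mul_le_mul_of_nonneg_left
              (hheavyR D (Finset.mem_filter.1 hD).1) ENNReal.toReal_nonneg
          obtain ⟨x₀, hx₀U, hx₀max⟩ := U.exists_max_image f hUne
          refine ⟨x₀, ?_⟩
          have hf0 : 0 ≤ f x₀ := Finset.sum_nonneg (fun _ _ => ENNReal.toReal_nonneg)
          calc δ * W ≤ ∑ x ∈ U, (m x).toReal * f x := favg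
            _ ≤ ∑ x ∈ U, (m x).toReal * f x₀ :=
              Finset.sum_le_sum (fun x hx =>
                mul_le_mul_of_nonneg_left (hx₀max x hx) ENNReal.toReal_nonneg)
            _ = (∑ x ∈ U, (m x).toReal) * f x₀ := by rw [← Finset.sum_mul]
            _ ≤ 1 * f x₀ := mul_le_mul_of_nonneg_right (hmsumR U) hf0
            _ = f x₀ := one_mul _
      obtain ⟨x₀, hx₀⟩ := main
      refine ⟨(Fin.snoc z x₀ : Fin (n+1) → ℕ), ?_⟩
      have hsub : s.filter (fun D => ∀ i, (Fin.snoc z x₀ : Fin (n+1) → ℕ) i ∉ D)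
          ⊆ E.filter (fun D => x₀ ∉ D) := by
        intro D hD
        rw [Finset.mem_filter] at hD ⊢
        constructor
        · rw [hE, Finset.mem_filter]
          refine ⟨hD.1, fun i => ?_⟩
          have := hD.2 i.castSucc
          rwa [Fin.snoc_castSucc] at this
        · have := hD.2 (Fin.last n)
          rwa [Fin.snoc_last] at this
      have hsplit : ∑ D ∈ E.filter (fun D => x₀ ∈ D), (Q D).toReal
          + ∑ D ∈ E.filter (fun D => x₀ ∉ D), (Q D).toReal = W := by
        rw [hW]; exact Finset.sum_filter_add_sum_filter_not E _ _
      have hWnn : 0 ≤ W := Finset.sum_nonneg (fun _ _ => ENNReal.toReal_nonneg)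
      calc ∑ D ∈ s.filter (fun D => ∀ i, (Fin.snoc z x₀ : Fin (n+1) → ℕ) i ∉ D), (Q D).toReal
          ≤ ∑ D ∈ E.filter (fun D => x₀ ∉ D), (Q D).toReal :=
            Finset.sum_le_sum_of_subset_of_nonneg hsub
              (fun _ _ _ => ENNReal.toReal_nonneg)
        _ = W - ∑ D ∈ E.filter (fun D => x₀ ∈ D), (Q D).toReal := by linarith
        _ ≤ W - δ * W := by linarith
        _ = (1 - δ) * W := by ring
        _ ≤ (1 - δ) * (1 - δ) ^ n := mul_le_mul_of_nonneg_left hz hδ1'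
        _ = (1 - δ) ^ (n + 1) := by ring
  obtain ⟨z, hz⟩ := key k
  refine ⟨z, fun D hD hQD => ?_⟩
  by_contra hcon
  rw [Set.not_nonempty_iff_eq_empty] at hcon
  have hmiss : ∀ i, z i ∉ D := by
    intro i hi
    have : z i ∈ (↑D : Set ℕ) ∩ Set.range z := ⟨hi, ⟨i, rfl⟩⟩
    rw [hcon] at this
    exact this
  have hDE : D ∈ s.filter (fun D => ∀ i, z i ∉ D) := by
    rw [Finset.mem_filter]
    exact ⟨by simpa [hs] using hD, hmiss⟩
  have hle : (Q D).toReal ≤ (1 - δ) ^ k := by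
    calc (Q D).toReal ≤ ∑ D ∈ s.filter (fun D => ∀ i, z i ∉ D), (Q D).toReal :=
          Finset.single_le_sum (fun _ _ => ENNReal.toReal_nonneg) hDE
      _ ≤ (1 - δ) ^ k := hz
  have hlt : (1 - δ) ^ k < (Q D).toReal :=
    (ENNReal.ofReal_lt_iff_lt_toReal (pow_nonneg hδ1' k) (Q.apply_ne_top D)).1 hQD
  linarith
end
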